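/- arXiv:2605.07441 — 2 statements merged into one kernel-verified Lean document; each statement's English description precedes it below -/
import Mathlib

section
/- Let Z_1, ..., Z_{N+1} be exchangeable real-valued random variables and let κ = ⌈(1-ε)(N+1)⌉ for ε ∈ (0,1). Then P(Z_{N+1} ≤ Z_{(κ)}) ≥ κ/(N+1) ≥ 1-ε, where Z_{(κ)} denotes the κ-th order statistic of Z_1, ..., Z_N. -/
open MeasureTheory ProbabilityTheory
open scoped ENNReal

/-- The κ-th smallest value (1-indexed by `i : Fin n`) of a finite tuple. -/
noncomputable def orderStat {n : ℕ} (f : Fin n → ℝ) (i : Fin n) : ℝ :=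
  f (Tuple.sort f i)

open Finset in
/-- The number of values strictly below the `r`-th sorted value is at most `r`. -/
lemma card_lt_sort_le {n : ℕ} (g : Fin n → ℝ) (r : Fin n) :
    (univ.filter (fun i => g i < g (Tuple.sort g r))).card ≤ (r : ℕ) := by
  have h := Finset.card_le_card_of_injOn (fun i => (Tuple.sort g).symm i)
    (s := univ.filter (fun i => g i < g (Tuple.sort g r))) (t := Finset.Iio r)
    (fun i hi => by
      simp only [Finset.mem_coe, Finset.mem_filter, Finset.mem_univ, true_and] at hi
      simp only [Finset.mem_coe, Finset.mem_Iio]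
      by_contra hc
      push_neg at hc
      have := Tuple.monotone_sort g hc
      simp only [Function.comp_apply, Equiv.apply_symm_apply] at this
      exact absurd hi (not_lt.2 this))
    (fun a _ b _ hab => (Tuple.sort g).symm.injective hab)
  simpa [Fin.card_Iio] using h

open Finset in
/-- If the `k`-th sorted value is below `t` then more than `k` values are below `t`. -/
lemma lt_card_of_sort_lt {n : ℕ} (f : Fin n → ℝ) (k : Fin n) (t : ℝ)
    (h : f (Tuple.sort f k) < t) :
    (k : ℕ) + 1 ≤ (univ.filter (fun i => f i < t)).card := by
  have h' := Finset.card_le_card_of_injOn (fun s => Tuple.sort f s)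
    (s := Finset.Iic k) (t := univ.filter (fun i => f i < t))
    (fun s hs => by
      simp only [Finset.mem_coe, Finset.mem_Iic] at hs
      simp only [Finset.mem_coe, Finset.mem_filter, Finset.mem_univ, true_and]
      exact lt_of_le_of_lt (Tuple.monotone_sort f hs) h)
    (fun a _ b _ hab => (Tuple.sort f).injective hab)
  simpa [Fin.card_Iic] using h'

open Finset in
lemma le_orderStat_iff {n : ℕ} (f : Fin n → ℝ) (k : Fin n) (t : ℝ) :
    t ≤ orderStat f k ↔ (univ.filter (fun i => f i < t)).card ≤ (k : ℕ) := by
  constructor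
  · intro h
    calc (univ.filter (fun i => f i < t)).card
        ≤ (univ.filter (fun i => f i < f (Tuple.sort f k))).card := by
          apply Finset.card_le_card
          intro i hi
          simp only [Finset.mem_filter, Finset.mem_univ, true_and] at hi ⊢
          exact lt_of_lt_of_le hi h
      _ ≤ (k : ℕ) := card_lt_sort_le f k
  · intro h
    by_contra hc
    push_neg at hc
    have := lt_card_of_sort_lt f k t hc
    omega

open Finset in
/-- At least `κ` indices have fewer than `κ` strictly smaller values among the others. -/
lemma kappa_le_card_good {n : ℕ} (g : Fin n → ℝ) (κ : ℕ) (hκn : κ ≤ n) :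
    κ ≤ (univ.filter (fun j =>
      (univ.filter (fun i => i ≠ j ∧ g i < g j)).card ≤ κ - 1)).card := by
  have h := Finset.card_le_card_of_injOn
    (fun r : Fin κ => Tuple.sort g (Fin.castLE hκn r))
    (s := (univ : Finset (Fin κ)))
    (t := univ.filter (fun j =>
      (univ.filter (fun i => i ≠ j ∧ g i < g j)).card ≤ κ - 1))
    (fun r _ => by
      simp only [Finset.mem_coe, Finset.mem_filter, Finset.mem_univ, true_and]
      have h1 : (univ.filter (fun i => i ≠ Tuple.sort g (Fin.castLE hκn r) ∧
          g i < g (Tuple.sort g (Fin.castLE hκn r)))).card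
          ≤ (univ.filter (fun i => g i < g (Tuple.sort g (Fin.castLE hκn r)))).card := by
        apply Finset.card_le_card
        intro i hi
        simp only [Finset.mem_filter, Finset.mem_univ, true_and] at hi ⊢
        exact hi.2
      have h2 := card_lt_sort_le g (Fin.castLE hκn r)
      have h3 : (r : ℕ) < κ := r.isLt
      simp only [Fin.coe_castLE] at h2
      omega)
    (fun a _ b _ hab => by
      have := (Tuple.sort g).injective hab
      exact Fin.castLE_injective hκn this)
  simpa using h

/-- Split-conformal coverage bound: for exchangeable Z_1,…,Z_{N+1} and
κ = ⌈(1−ε)(N+1)⌉, P(Z_{N+1} ≤ Z_{(κ)}) ≥ κ/(N+1) ≥ 1−ε, where Z_{(κ)} is the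
κ-th order statistic of Z_1,…,Z_N. -/
theorem exchangeable_order_stat_coverage
    {Ω : Type*} [MeasurableSpace Ω] (P : Measure Ω) [IsProbabilityMeasure P]
    (N : ℕ) (hN : 0 < N) (Z : Fin (N + 1) → Ω → ℝ)
    (hmeas : ∀ i, Measurable (Z i))
    (hexch : ∀ σ : Equiv.Perm (Fin (N + 1)),
      Measure.map (fun ω i => Z (σ i) ω) P = Measure.map (fun ω i => Z i ω) P)
    (ε : ℝ) (hε0 : 0 < ε) (hε1 : ε < 1)
    (κ : ℕ) (hκ : κ = ⌈(1 - ε) * (N + 1 : ℝ)⌉₊)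
    (hκ1 : 1 ≤ κ) (hκN : κ ≤ N) :
    ENNReal.ofReal ((κ : ℝ) / (N + 1)) ≤
        P {ω | Z (Fin.last N) ω ≤
          orderStat (fun i : Fin N => Z i.castSucc ω) ⟨κ - 1, by omega⟩} ∧
      (1 - ε) ≤ (κ : ℝ) / (N + 1) := by
  classical
  have hNpos : (0 : ℝ) < (N : ℝ) + 1 := by positivity
  have h2 : (1 - ε) ≤ (κ : ℝ) / (N + 1) := by
    rw [le_div_iff₀ hNpos, hκ]
    exact Nat.le_ceil _
  refine ⟨?_, h2⟩
  -- the random vector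
  set V : Ω → (Fin (N + 1) → ℝ) := fun ω i => Z i ω with hVdef
  have hVmeas : Measurable V := measurable_pi_lambda _ hmeas
  -- the "good rank" sets in the path space
  set S : Fin (N + 1) → Set (Fin (N + 1) → ℝ) := fun j =>
    {g | (Finset.univ.filter (fun i => i ≠ j ∧ g i < g j)).card ≤ κ - 1} with hSdef
  have hSmeas : ∀ j, MeasurableSet (S j) := by
    intro j
    have hc : Measurable (fun g : Fin (N + 1) → ℝ =>
        (Finset.univ.filter (fun i => i ≠ j ∧ g i < g j)).card) := by
      simp_rw [Finset.card_filter]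
      apply Finset.measurable_sum
      intro i _
      apply Measurable.ite ?_ measurable_const measurable_const
      have : {g : Fin (N + 1) → ℝ | i ≠ j ∧ g i < g j} =
          {g : Fin (N + 1) → ℝ | i ≠ j} ∩ {g | g i < g j} := by
        ext g; simp [Set.mem_inter_iff]
      rw [this]
      exact (MeasurableSet.const _).inter
        (measurableSet_lt (measurable_pi_apply i) (measurable_pi_apply j))
    exact hc measurableSet_Iic
  -- all events have the same probability, by exchangeability
  have hPeq : ∀ j, P (V ⁻¹' S j) = P (V ⁻¹' S (Fin.last N)) := by
    intro j
    set τ := Equiv.swap j (Fin.last N) with hτdef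
    have hτlast : τ (Fin.last N) = j := Equiv.swap_apply_right _ _
    have hSj : S j = (fun g : Fin (N + 1) → ℝ => g ∘ τ) ⁻¹' S (Fin.last N) := by
      ext g
      simp only [Set.mem_preimage, hSdef, Set.mem_setOf_eq, Function.comp_apply, hτlast]
      have hcard : (Finset.univ.filter
            (fun i => i ≠ Fin.last N ∧ g (τ i) < g j)).card =
          (Finset.univ.filter (fun i => i ≠ j ∧ g i < g j)).card := by
        apply Finset.card_equiv τ
        intro i
        simp only [Finset.mem_filter, Finset.mem_univ, true_and]
        have hiff : τ i = j ↔ i = Fin.last N := by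
          rw [← hτlast]
          exact EmbeddingLike.apply_eq_iff_eq τ
        constructor
        · rintro ⟨h1, h2⟩
          exact ⟨fun hc => h1 (hiff.mp hc), h2⟩
        · rintro ⟨h1, h2⟩
          exact ⟨fun hc => h1 (hiff.mpr hc), h2⟩
      rw [hcard]
    have hτmeas : Measurable (fun ω => fun i => Z (τ i) ω) :=
      measurable_pi_lambda _ (fun i => hmeas (τ i))
    calc P (V ⁻¹' S j)
        = P ((fun ω => fun i => Z (τ i) ω) ⁻¹' S (Fin.last N)) := by
          rw [hSj]; rfl
      _ = (Measure.map (fun ω i => Z (τ i) ω) P) (S (Fin.last N)) :=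
          (Measure.map_apply hτmeas (hSmeas _)).symm
      _ = (Measure.map (fun ω i => Z i ω) P) (S (Fin.last N)) := by rw [hexch τ]
      _ = P (V ⁻¹' S (Fin.last N)) := Measure.map_apply hVmeas (hSmeas _)
  -- the sum of the probabilities is at least κ
  have hBmeas : ∀ j, MeasurableSet (V ⁻¹' S j) := fun j => hVmeas (hSmeas j)
  have hsum : (κ : ℝ≥0∞) ≤ ∑ j, P (V ⁻¹' S j) := by
    have h1 : ∀ j, P (V ⁻¹' S j) =
        ∫⁻ ω, (V ⁻¹' S j).indicator (1 : Ω → ℝ≥0∞) ω ∂P := fun j =>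
      (lintegral_indicator_one (hBmeas j)).symm
    simp_rw [h1]
    rw [← lintegral_finset_sum _ (fun j _ => measurable_one.indicator (hBmeas j))]
    have hconst : (κ : ℝ≥0∞) = ∫⁻ _, (κ : ℝ≥0∞) ∂P := by simp
    rw [hconst]
    apply lintegral_mono
    intro ω
    have hkey := kappa_le_card_good (V ω) κ (by omega)
    have hind : ∑ j, (V ⁻¹' S j).indicator (1 : Ω → ℝ≥0∞) ω =
        ((Finset.univ.filter (fun j : Fin (N + 1) =>
          (Finset.univ.filter (fun i => i ≠ j ∧ V ω i < V ω j)).card ≤ κ - 1)).card :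
          ℝ≥0∞) := by
      rw [← Finset.sum_boole]
      apply Finset.sum_congr rfl
      intro j _
      simp only [Set.indicator_apply, Set.mem_preimage, hSdef, Set.mem_setOf_eq, Pi.one_apply]
    show (κ : ℝ≥0∞) ≤ ∑ j, (V ⁻¹' S j).indicator (1 : Ω → ℝ≥0∞) ω
    rw [hind]
    exact_mod_cast hkey
  -- hence κ ≤ (N+1) * P(B_last)
  have hfin : (κ : ℝ≥0∞) ≤ ((N : ℝ≥0∞) + 1) * P (V ⁻¹' S (Fin.last N)) := by
    calc (κ : ℝ≥0∞) ≤ ∑ j, P (V ⁻¹' S j) := hsum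
      _ = ∑ _j : Fin (N + 1), P (V ⁻¹' S (Fin.last N)) := by
          exact Finset.sum_congr rfl (fun j _ => hPeq j)
      _ = ((N : ℝ≥0∞) + 1) * P (V ⁻¹' S (Fin.last N)) := by
          rw [Finset.sum_const, Finset.card_univ, Fintype.card_fin, nsmul_eq_mul]
          push_cast
          ring
  have hdiv : (κ : ℝ≥0∞) / ((N : ℝ≥0∞) + 1) ≤ P (V ⁻¹' S (Fin.last N)) := by
    rw [ENNReal.div_le_iff (by simp) (by simp)]
    calc (κ : ℝ≥0∞) ≤ ((N : ℝ≥0∞) + 1) * P (V ⁻¹' S (Fin.last N)) := hfin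
      _ = P (V ⁻¹' S (Fin.last N)) * ((N : ℝ≥0∞) + 1) := mul_comm _ _
  -- identify the event
  have hevent : V ⁻¹' S (Fin.last N) = {ω | Z (Fin.last N) ω ≤
      orderStat (fun i : Fin N => Z i.castSucc ω) ⟨κ - 1, by omega⟩} := by
    ext ω
    simp only [Set.mem_preimage, hSdef, Set.mem_setOf_eq]
    rw [le_orderStat_iff]
    have hval : ((⟨κ - 1, by omega⟩ : Fin N) : ℕ) = κ - 1 := rfl
    rw [hval]
    have hcard : (Finset.univ.filter
          (fun i : Fin (N + 1) => i ≠ Fin.last N ∧ V ω i < V ω (Fin.last N))).card =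
        (Finset.univ.filter
          (fun i : Fin N => Z i.castSucc ω < Z (Fin.last N) ω)).card := by
      have hmap : Finset.univ.filter
          (fun i : Fin (N + 1) => i ≠ Fin.last N ∧ V ω i < V ω (Fin.last N)) =
          (Finset.univ.filter
            (fun i : Fin N => Z i.castSucc ω < Z (Fin.last N) ω)).map
            ⟨Fin.castSucc, Fin.castSucc_injective N⟩ := by
        ext i
        simp only [Finset.mem_filter, Finset.mem_univ, true_and, Finset.mem_map,
          Function.Embedding.coeFn_mk]
        constructor
        · rintro ⟨h1, h2⟩
          refine ⟨i.castPred h1, ?_, Fin.castSucc_castPred i h1⟩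
          have : (i.castPred h1).castSucc = i := Fin.castSucc_castPred i h1
          rw [this]
          exact h2
        · rintro ⟨a, ha, rfl⟩
          exact ⟨Fin.castSucc_lt_last a |>.ne, ha⟩
      rw [hmap, Finset.card_map]
    rw [hcard]
  rw [hevent] at hdiv
  refine le_trans (le_of_eq ?_) hdiv
  rw [ENNReal.ofReal_div_of_pos hNpos, ENNReal.ofReal_natCast]
  congr 1
  rw [ENNReal.ofReal_add (by positivity) zero_le_one, ENNReal.ofReal_natCast,
    ENNReal.ofReal_one]
end

section
/- Let P_k = {z : D_k z ≤ d_k}, k=1,...,K, be polytopes contained in the box ‖z‖_∞ ≤ M, and let F ⊆ ℝ^m × {0,1}^K × (ℝ^m)^K be the feasible set of the Big-M formulation (17). Then the projection of F onto the z-coordinates equals ∪_{k=1}^K P_k intersected with the box {‖z‖_∞ ≤ M}. -/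
open Matrix

/-- The projection onto the z-coordinates of the feasible set of the Big-M
formulation equals the union of the polytopes intersected with the box. -/
theorem bigM_projection_eq_union
    {K p m : ℕ} (D : Fin K → Matrix (Fin p) (Fin m) ℝ)
    (d : Fin K → Fin p → ℝ) (M : ℝ) (hM : 0 < M)
    (hbox : ∀ k, ∀ z : Fin m → ℝ, (∀ i, (D k *ᵥ z) i ≤ d k i) → ∀ i, |z i| ≤ M) :
    {z : Fin m → ℝ | ∃ (α : Fin K → ℝ) (w : Fin K → Fin m → ℝ),
        (∀ k, α k = 0 ∨ α k = 1) ∧ (∑ k, α k) = 1 ∧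
        (∀ i, (∑ k, ((D k *ᵥ w k) i - α k * d k i)) ≤ 0) ∧
        (∀ k i, |z i - w k i| ≤ M * (1 - α k)) ∧
        (∀ k i, |w k i| ≤ M * α k)} =
      (⋃ k, {z : Fin m → ℝ | ∀ i, (D k *ᵥ z) i ≤ d k i}) ∩
        {z | ∀ i, |z i| ≤ M} := by
  ext z
  simp only [Set.mem_setOf_eq, Set.mem_inter_iff, Set.mem_iUnion]
  constructor
  · rintro ⟨α, w, hbin, hsum, hle, hzw, hw⟩
    -- find the unique k₀ with α k₀ = 1
    have hne : ∃ k₀, α k₀ = 1 := by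
      by_contra h
      push_neg at h
      have : ∀ k ∈ Finset.univ, α k = 0 := fun k _ => (hbin k).resolve_right (h k)
      rw [Finset.sum_eq_zero this] at hsum
      norm_num at hsum
    obtain ⟨k₀, hk₀⟩ := hne
    have hzero : ∀ k, k ≠ k₀ → α k = 0 := by
      intro k hk
      by_contra h
      have hk1 : α k = 1 := (hbin k).resolve_left h
      have hnn : ∀ j ∈ Finset.univ, (0:ℝ) ≤ α j := by
        intro j _; rcases hbin j with h | h <;> simp [h]
      have h2 : (2:ℝ) ≤ ∑ j, α j := by
        have := Finset.add_sum_erase Finset.univ α (Finset.mem_univ k)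
        have hk₀' : k₀ ∈ Finset.univ.erase k := Finset.mem_erase.2 ⟨Ne.symm hk, Finset.mem_univ k₀⟩
        have := Finset.add_sum_erase (Finset.univ.erase k) α hk₀'
        have hnn3 : (0:ℝ) ≤ ∑ j ∈ (Finset.univ.erase k).erase k₀, α j :=
          Finset.sum_nonneg fun j _ => hnn j (Finset.mem_univ j)
        calc (2:ℝ) = α k + (α k₀ + 0) := by rw [hk1, hk₀]; ring
          _ ≤ α k + (α k₀ + ∑ j ∈ (Finset.univ.erase k).erase k₀, α j) := by
              gcongr
          _ = α k + ∑ j ∈ Finset.univ.erase k, α j := by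
              rw [Finset.add_sum_erase (Finset.univ.erase k) α hk₀']
          _ = ∑ j, α j := Finset.add_sum_erase Finset.univ α (Finset.mem_univ k)
      rw [hsum] at h2; norm_num at h2
    -- w k = 0 for k ≠ k₀, and z = w k₀
    have hwz : ∀ k, k ≠ k₀ → w k = 0 := by
      intro k hk
      funext i
      have := hw k i
      rw [hzero k hk, mul_zero] at this
      have := abs_nonpos_iff.mp this
      simpa using this
    have hz : z = w k₀ := by
      funext i
      have := hzw k₀ i
      rw [hk₀] at this
      simp only [sub_self, mul_zero] at this
      have := abs_nonpos_iff.mp this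
      linarith [sub_eq_zero.mp this]
    refine ⟨⟨k₀, fun i => ?_⟩, fun i => ?_⟩
    · have h := hle i
      have heq : ∀ k ∈ Finset.univ, k ≠ k₀ →
          ((D k *ᵥ w k) i - α k * d k i) = 0 := by
        intro k _ hk
        rw [hwz k hk, hzero k hk, mulVec_zero]
        simp
      rw [Finset.sum_eq_single k₀ heq (by simp)] at h
      rw [hk₀, one_mul] at h
      rw [hz]
      linarith
    · rw [hz]
      have := hw k₀ i
      rw [hk₀, mul_one] at this
      exact this
  · rintro ⟨⟨k₀, hk₀⟩, hbz⟩
    refine ⟨fun k => if k = k₀ then 1 else 0,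
      fun k => if k = k₀ then z else 0, ?_, ?_, ?_, ?_, ?_⟩
    · intro k; by_cases h : k = k₀ <;> simp [h]
    · simp
    · intro i
      have heq : ∀ k ∈ Finset.univ, k ≠ k₀ →
          ((D k *ᵥ (if k = k₀ then z else 0)) i
            - (if k = k₀ then (1:ℝ) else 0) * d k i) = 0 := by
        intro k _ hk
        simp [hk, mulVec_zero]
      rw [Finset.sum_eq_single k₀ heq (by simp)]
      simp only [if_pos rfl, one_mul, reduceIte]
      linarith [hk₀ i]
    · intro k i
      by_cases h : k = k₀
      · simp [h]
      · simpa [h] using hbz i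
    · intro k i
      by_cases h : k = k₀ <;> simp [h]
      exact hbz i
end
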